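/- Let n ≥ 5 be odd. A rational vector b = (b₁,…,b_n) satisfies the D_n cycle system with marking p = n−1 and excess q = n if and only if b_i = i for all 1 ≤ i ≤ n−2 and b_{n−1} = b_n = (n−1)/2. In particular the system has a unique rational solution and this solution is integral. -/

import Mathlib

/-- Adjacency in the `D_n` dual graph (`n ≥ 4`): vertices `1, …, n`, with `i` adjacent to
`i+1` for `1 ≤ i ≤ n−3`, and vertex `n−2` adjacent to both `n−1` and `n`. -/
def dnAdj (n i j : ℕ) : Prop :=
  (j = i + 1 ∧ 1 ≤ i ∧ i ≤ n - 3) ∨ (i = j + 1 ∧ 1 ≤ j ∧ j ≤ n - 3) ∨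
  (i = n - 2 ∧ (j = n - 1 ∨ j = n)) ∨ (j = n - 2 ∧ (i = n - 1 ∨ i = n))

instance (n i j : ℕ) : Decidable (dnAdj n i j) := by unfold dnAdj; infer_instance

/-- `b` satisfies the `D_n` cycle system with marking `p` and excess `q`:
for every vertex `i`, `−2b_i + Σ_{j adjacent to i} b_j + δ_{i,p} = −δ_{i,q}`. -/
def dnSystem {R : Type*} [CommRing R] (n p q : ℕ) (b : ℕ → R) : Prop :=
  ∀ i : ℕ, 1 ≤ i → i ≤ n →
    -2 * b i + (∑ j ∈ Finset.Icc 1 n, if dnAdj n i j then b j else 0)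
      + (if i = p then 1 else 0) = -(if i = q then 1 else 0)

lemma dn_sum_adj (n i : ℕ) (b : ℕ → ℚ) :
    (∑ j ∈ Finset.Icc 1 n, if dnAdj n i j then b j else 0)
      = ∑ j ∈ (Finset.Icc 1 n).filter (fun j => dnAdj n i j), b j := by
  rw [Finset.sum_filter]

lemma dn_filter_one (m : ℕ) :
    (Finset.Icc 1 (m+5)).filter (fun j => dnAdj (m+5) 1 j) = {2} := by
  ext j
  rw [Finset.mem_filter]
  simp only [Finset.mem_filter, Finset.mem_Icc, Finset.mem_singleton, dnAdj, and_true, or_true, true_or, true_and, and_false, or_false, false_or]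
  omega

lemma dn_filter_mid (m k : ℕ) (hk : k ≤ m) :
    (Finset.Icc 1 (m+5)).filter (fun j => dnAdj (m+5) (k+2) j) = {k+1, k+3} := by
  ext j
  rw [Finset.mem_filter]
  simp only [Finset.mem_filter, Finset.mem_Icc, Finset.mem_insert, Finset.mem_singleton, dnAdj, and_true, or_true, true_or, true_and, and_false, or_false, false_or]
  omega

lemma dn_filter_node (m : ℕ) :
    (Finset.Icc 1 (m+5)).filter (fun j => dnAdj (m+5) (m+3) j) = {m+2, m+4, m+5} := by
  ext j
  rw [Finset.mem_filter]
  simp only [Finset.mem_filter, Finset.mem_Icc, Finset.mem_insert, Finset.mem_singleton, dnAdj, and_true, or_true, true_or, true_and, and_false, or_false, false_or]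
  omega

lemma dn_filter_tip1 (m : ℕ) :
    (Finset.Icc 1 (m+5)).filter (fun j => dnAdj (m+5) (m+4) j) = {m+3} := by
  ext j
  rw [Finset.mem_filter]
  simp only [Finset.mem_filter, Finset.mem_Icc, Finset.mem_singleton, dnAdj, and_true, or_true, true_or, true_and, and_false, or_false, false_or]
  omega

lemma dn_filter_tip2 (m : ℕ) :
    (Finset.Icc 1 (m+5)).filter (fun j => dnAdj (m+5) (m+5) j) = {m+3} := by
  ext j
  simp only [Finset.mem_filter, Finset.mem_Icc, Finset.mem_singleton, dnAdj, and_true, or_true, true_or, true_and, and_false, or_false, false_or]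
  omega

/-- Proposition 4.6, Case 1 (`n` odd, `Γ″` meeting `E_{n−1}`, testing `E = E_n`):
for odd `n ≥ 5`, the `D_n` cycle system with marking `p = n−1` and excess `q = n`
has the unique (integral) solution `b_i = i` for `i ≤ n−2`,
`b_{n−1} = b_n = (n−1)/2`. -/
theorem dn_cycle_system_right_odd (n : ℕ) (hn : 5 ≤ n) (hodd : Odd n) (b : ℕ → ℚ) :
    dnSystem n (n - 1) n b ↔
      ((∀ i : ℕ, 1 ≤ i → i ≤ n - 2 → b i = (i : ℚ)) ∧
        b (n - 1) = ((n : ℚ) - 1) / 2 ∧ b n = ((n : ℚ) - 1) / 2) := by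
  obtain ⟨m, rfl⟩ : ∃ m, n = m + 5 := ⟨n - 5, by omega⟩
  have h1 : m + 5 - 1 = m + 4 := by omega
  have h2 : m + 5 - 2 = m + 3 := by omega
  rw [h1, h2]
  constructor
  · intro h
    have e1 : -2 * b 1 + b 2 = 0 := by
      have e := h 1 (by omega) (by omega)
      rw [dn_sum_adj, dn_filter_one, Finset.sum_singleton, if_neg (by omega),
        if_neg (by omega)] at e
      linarith
    have echain : ∀ k, k ≤ m → -2 * b (k+2) + (b (k+1) + b (k+3)) = 0 := by
      intro k hk
      have e := h (k+2) (by omega) (by omega)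
      rw [dn_sum_adj, dn_filter_mid m k hk, Finset.sum_pair (by omega), if_neg (by omega),
        if_neg (by omega)] at e
      linarith
    have e3 : -2 * b (m+3) + (b (m+2) + (b (m+4) + b (m+5))) = 0 := by
      have e := h (m+3) (by omega) (by omega)
      rw [dn_sum_adj, dn_filter_node, Finset.sum_insert (by simp),
        Finset.sum_pair (by omega), if_neg (by omega), if_neg (by omega)] at e
      linarith
    have e4 : -2 * b (m+4) + b (m+3) + 1 = 0 := by
      have e := h (m+4) (by omega) (by omega)
      rw [dn_sum_adj, dn_filter_tip1, Finset.sum_singleton, if_pos rfl,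
        if_neg (by omega)] at e
      linarith
    have e5 : -2 * b (m+5) + b (m+3) = -1 := by
      have e := h (m+5) (by omega) (by omega)
      rw [dn_sum_adj, dn_filter_tip2, Finset.sum_singleton, if_neg (by omega),
        if_pos rfl] at e
      linarith
    have hb : ∀ k, k ≤ m + 1 →
        b (k+1) = ((k : ℚ) + 1) * b 1 ∧ b (k+2) = ((k : ℚ) + 2) * b 1 := by
      intro k
      induction k with
      | zero => exact fun _ => ⟨by push_cast; ring, by push_cast; linarith [e1]⟩
      | succ k ih =>
        intro hk
        obtain ⟨ihA, ihB⟩ := ih (by omega)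
        have hc := echain k (by omega)
        constructor
        · push_cast
          linarith [ihB]
        · push_cast
          have : b (k+1+2) = b (k+3) := by norm_num
          rw [this]
          linarith [ihA, ihB, hc]
    obtain ⟨A, B⟩ := hb (m+1) le_rfl
    have hA : b (m+2) = ((m : ℚ) + 2) * b 1 := by
      have : m + 1 + 1 = m + 2 := by omega
      rw [this] at A; push_cast at A; linarith [A]
    have hB : b (m+3) = ((m : ℚ) + 3) * b 1 := by
      have : m + 1 + 2 = m + 3 := by omega
      rw [this] at B; push_cast at B; linarith [B]
    have hb1 : b 1 = 1 := by linear_combination (hA - hB) - e3 - (1/2) * e4 - (1/2) * e5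
    refine ⟨?_, ?_, ?_⟩
    · intro i hi1 hi2
      obtain ⟨k, rfl⟩ : ∃ k, i = k + 1 := ⟨i - 1, by omega⟩
      rcases Nat.lt_or_ge k (m+2) with hk | hk
      · have := (hb k (by omega)).1
        rw [hb1] at this
        push_cast
        linarith [this]
      · have hk2 : k = m + 2 := by omega
        subst hk2
        rw [hb1] at hB
        have h23 : m + 2 + 1 = m + 3 := by omega
        rw [h23]
        push_cast
        linarith [hB]
    · rw [hb1] at hB
      push_cast
      linarith [e4, hB]
    · rw [hb1] at hB
      push_cast
      linarith [e5, hB]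
  · rintro ⟨hmain, h4, h5⟩
    push_cast at h4 h5
    intro i hi1 hi2
    have hcase : i = 1 ∨ (2 ≤ i ∧ i ≤ m+2) ∨ i = m+3 ∨ i = m+4 ∨ i = m+5 := by omega
    rcases hcase with rfl | ⟨hA', hB'⟩ | rfl | rfl | rfl
    · rw [dn_sum_adj, dn_filter_one, Finset.sum_singleton, if_neg (by omega),
        if_neg (by omega)]
      have v1 := hmain 1 (by omega) (by omega)
      have v2 := hmain 2 (by omega) (by omega)
      push_cast at v1 v2
      linarith
    · obtain ⟨k, rfl⟩ : ∃ k, i = k + 2 := ⟨i - 2, by omega⟩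
      have hk : k ≤ m := by omega
      rw [dn_sum_adj, dn_filter_mid m k hk, Finset.sum_pair (by omega), if_neg (by omega),
        if_neg (by omega)]
      have v1 := hmain (k+1) (by omega) (by omega)
      have v2 := hmain (k+2) (by omega) (by omega)
      have v3 := hmain (k+3) (by omega) (by omega)
      push_cast at v1 v2 v3
      linarith
    · rw [dn_sum_adj, dn_filter_node, Finset.sum_insert (by simp),
        Finset.sum_pair (by omega), if_neg (by omega), if_neg (by omega)]
      have v1 := hmain (m+2) (by omega) (by omega)
      have v2 := hmain (m+3) (by omega) (by omega)
      push_cast at v1 v2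
      linarith
    · rw [dn_sum_adj, dn_filter_tip1, Finset.sum_singleton, if_pos rfl,
        if_neg (by omega)]
      have v2 := hmain (m+3) (by omega) (by omega)
      push_cast at v2
      linarith
    · rw [dn_sum_adj, dn_filter_tip2, Finset.sum_singleton, if_neg (by omega),
        if_pos rfl]
      have v2 := hmain (m+3) (by omega) (by omega)
      push_cast at v2
      linarith
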